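/- Let F be a probability density in v and φ ∈ 𝒮(ℝ^d). Define χ^ε(x,v) = ∫₀^∞ e^{−t} φ(x+εvt) dt. Then ‖χ^ε F‖_{L²_{F^{-1}}} ≤ ‖φ‖_{L²(ℝ^d)}, i.e. ∫∫ |χ^ε(x,v)|² F(v) dv dx ≤ ∫ |φ(x)|² dx. -/

import Mathlib

open MeasureTheory
open scoped ENNReal

lemma aux_cs {g : ℝ → ℝ} (hgc : Continuous g) {C : ℝ} (hC : ∀ t, |g t| ≤ C) :
    ENNReal.ofReal ((∫ t in Set.Ioi (0:ℝ), Real.exp (-t) * g t) ^ 2) ≤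
      ∫⁻ t in Set.Ioi (0:ℝ), ENNReal.ofReal (Real.exp (-t)) * ENNReal.ofReal ((g t) ^ 2) := by
  have hexpint : IntegrableOn (fun t => Real.exp (-t)) (Set.Ioi (0:ℝ)) := by
    simpa using exp_neg_integrableOn_Ioi 0 (by norm_num : (0:ℝ) < 1)
  have hexp1 : ∫⁻ t in Set.Ioi (0:ℝ), ENNReal.ofReal (Real.exp (-t)) = 1 := by
    rw [← ofReal_integral_eq_lintegral_ofReal hexpint
      (Filter.Eventually.of_forall fun t => (Real.exp_pos _).le), integral_exp_neg_Ioi_zero,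
      ENNReal.ofReal_one]
  have hgi : IntegrableOn (fun t => Real.exp (-t) * |g t|) (Set.Ioi (0:ℝ)) := by
    refine Integrable.mono' (hexpint.mul_const C)
      ((Real.continuous_exp.comp continuous_neg).mul hgc.abs).aestronglyMeasurable ?_
    filter_upwards with t
    rw [norm_mul, Real.norm_eq_abs, Real.norm_eq_abs, Real.abs_exp, abs_abs]
    exact mul_le_mul_of_nonneg_left (hC t) (Real.exp_pos _).le
  set ν := (volume : Measure ℝ).restrict (Set.Ioi (0:ℝ)) with hν
  have hffm : AEMeasurable (fun t => ENNReal.ofReal (Real.exp (-t)) ^ ((1:ℝ)/2)) ν := by fun_prop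
  have hggm : AEMeasurable
      (fun t => ENNReal.ofReal (Real.exp (-t)) ^ ((1:ℝ)/2) * ENNReal.ofReal (|g t|)) ν := by
    fun_prop
  have holder := ENNReal.lintegral_mul_le_Lp_mul_Lq ν
    Real.HolderConjugate.two_two hffm hggm
  simp only [Pi.mul_apply] at holder
  have eq1 : (∫⁻ t, (ENNReal.ofReal (Real.exp (-t)) ^ ((1:ℝ)/2)) *
      (ENNReal.ofReal (Real.exp (-t)) ^ ((1:ℝ)/2) * ENNReal.ofReal (|g t|)) ∂ν) =
      ∫⁻ t, ENNReal.ofReal (Real.exp (-t) * |g t|) ∂ν := by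
    refine lintegral_congr fun t => ?_
    have h0 : ENNReal.ofReal (Real.exp (-t)) ≠ 0 := by simp [Real.exp_pos]
    rw [← mul_assoc, ← ENNReal.rpow_add _ _ h0 ENNReal.ofReal_ne_top]
    norm_num
    rw [← ENNReal.ofReal_mul (Real.exp_pos (-t)).le]
  have eq2 : (∫⁻ t, (ENNReal.ofReal (Real.exp (-t)) ^ ((1:ℝ)/2)) ^ (2:ℝ) ∂ν) = 1 := by
    rw [← hexp1]
    refine lintegral_congr fun t => ?_
    rw [← ENNReal.rpow_mul]
    norm_num
  have eq3 : (∫⁻ t, (ENNReal.ofReal (Real.exp (-t)) ^ ((1:ℝ)/2) * ENNReal.ofReal (|g t|)) ^ (2:ℝ) ∂ν) =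
      ∫⁻ t, ENNReal.ofReal (Real.exp (-t)) * ENNReal.ofReal ((g t) ^ 2) ∂ν := by
    refine lintegral_congr fun t => ?_
    rw [ENNReal.mul_rpow_of_nonneg _ _ (by norm_num : (0:ℝ) ≤ 2), ← ENNReal.rpow_mul,
      ENNReal.ofReal_rpow_of_nonneg (abs_nonneg _) (by norm_num : (0:ℝ) ≤ 2),
      show ((2:ℝ)) = ((2:ℕ):ℝ) by norm_num, Real.rpow_natCast, sq_abs]
    norm_num
  have h1 : |∫ t in Set.Ioi (0:ℝ), Real.exp (-t) * g t| ≤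
      ∫ t in Set.Ioi (0:ℝ), Real.exp (-t) * |g t| := by
    calc |∫ t in Set.Ioi (0:ℝ), Real.exp (-t) * g t|
        = ‖∫ t in Set.Ioi (0:ℝ), Real.exp (-t) * g t‖ := (Real.norm_eq_abs _).symm
      _ ≤ ∫ t in Set.Ioi (0:ℝ), ‖Real.exp (-t) * g t‖ := norm_integral_le_integral_norm _
      _ = ∫ t in Set.Ioi (0:ℝ), Real.exp (-t) * |g t| := by
          simp [Real.norm_eq_abs, abs_mul, Real.abs_exp]
  calc ENNReal.ofReal ((∫ t in Set.Ioi (0:ℝ), Real.exp (-t) * g t) ^ 2)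
      = ENNReal.ofReal (|∫ t in Set.Ioi (0:ℝ), Real.exp (-t) * g t|) ^ (2:ℝ) := by
        rw [ENNReal.ofReal_rpow_of_nonneg (abs_nonneg _) (by norm_num : (0:ℝ) ≤ 2),
          show ((2:ℝ)) = ((2:ℕ):ℝ) by norm_num, Real.rpow_natCast, sq_abs]
    _ ≤ ENNReal.ofReal (∫ t in Set.Ioi (0:ℝ), Real.exp (-t) * |g t|) ^ (2:ℝ) :=
        ENNReal.rpow_le_rpow (ENNReal.ofReal_le_ofReal h1) (by norm_num)
    _ = (∫⁻ t, ENNReal.ofReal (Real.exp (-t) * |g t|) ∂ν) ^ (2:ℝ) := by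
        rw [ofReal_integral_eq_lintegral_ofReal hgi (Filter.Eventually.of_forall fun t =>
          mul_nonneg (Real.exp_pos _).le (abs_nonneg _))]
    _ = (∫⁻ t, (ENNReal.ofReal (Real.exp (-t)) ^ ((1:ℝ)/2)) *
          (ENNReal.ofReal (Real.exp (-t)) ^ ((1:ℝ)/2) * ENNReal.ofReal (|g t|)) ∂ν) ^ (2:ℝ) := by
        rw [eq1]
    _ ≤ ((∫⁻ t, (ENNReal.ofReal (Real.exp (-t)) ^ ((1:ℝ)/2)) ^ (2:ℝ) ∂ν) ^ ((1:ℝ)/2) *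
          (∫⁻ t, (ENNReal.ofReal (Real.exp (-t)) ^ ((1:ℝ)/2) * ENNReal.ofReal (|g t|)) ^ (2:ℝ) ∂ν)
            ^ ((1:ℝ)/2)) ^ (2:ℝ) := ENNReal.rpow_le_rpow holder (by norm_num)
    _ = ∫⁻ t, ENNReal.ofReal (Real.exp (-t)) * ENNReal.ofReal ((g t) ^ 2) ∂ν := by
        rw [eq2, eq3, ENNReal.one_rpow, one_mul, ← ENNReal.rpow_mul]
        norm_num

/-- For a probability density `F` in `v` and `φ ∈ 𝒮(ℝ^d)`, the function
`χ^ε(x,v) = ∫₀^∞ e^{−t} φ(x+εvt) dt` satisfies `‖χ^ε F‖_{L²_{F⁻¹}} ≤ ‖φ‖_{L²}`, i.e.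
`∫∫ |χ^ε|² F dv dx ≤ ∫ |φ|² dx`. -/
theorem stmt_5 {d : ℕ} (ε : ℝ) (hε : 0 < ε)
    (F : EuclideanSpace ℝ (Fin d) → ℝ) (hFmeas : Measurable F)
    (hFnonneg : ∀ v, 0 ≤ F v) (hFint : ∫ v, F v = 1)
    (φ : SchwartzMap (EuclideanSpace ℝ (Fin d)) ℝ)
    (χ : EuclideanSpace ℝ (Fin d) → EuclideanSpace ℝ (Fin d) → ℝ)
    (hχ : ∀ x v, χ x v = ∫ t in Set.Ioi (0:ℝ), Real.exp (-t) * φ (x + (ε * t) • v)) :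
    (∫ x, ∫ v, (χ x v) ^ 2 * F v) ≤ ∫ x, (φ x) ^ 2 := by
  obtain ⟨C, hC⟩ : ∃ C : ℝ, ∀ y, |φ y| ≤ C :=
    ⟨SchwartzMap.seminorm ℝ 0 0 φ, fun y => by
      simpa [Real.norm_eq_abs] using SchwartzMap.norm_le_seminorm ℝ φ y⟩
  have hexpint : IntegrableOn (fun t => Real.exp (-t)) (Set.Ioi (0:ℝ)) := by
    simpa using exp_neg_integrableOn_Ioi 0 (by norm_num : (0:ℝ) < 1)
  have hexp1 : ∫⁻ t in Set.Ioi (0:ℝ), ENNReal.ofReal (Real.exp (-t)) = 1 := by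
    rw [← ofReal_integral_eq_lintegral_ofReal hexpint
      (Filter.Eventually.of_forall fun t => (Real.exp_pos _).le), integral_exp_neg_Ioi_zero,
      ENNReal.ofReal_one]
  -- F is integrable with lintegral 1
  have hFi : Integrable F := by
    by_contra h
    rw [integral_undef h] at hFint
    exact one_ne_zero hFint.symm
  have hF1 : ∫⁻ v, ENNReal.ofReal (F v) = 1 := by
    rw [← ofReal_integral_eq_lintegral_ofReal hFi (Filter.Eventually.of_forall hFnonneg), hFint,
      ENNReal.ofReal_one]
  -- φ² is integrable
  have hφ2i : Integrable (fun x : EuclideanSpace ℝ (Fin d) => (φ x) ^ 2) := by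
    refine Integrable.mono' (φ.integrable.norm.const_mul C)
      ((φ.continuous.pow 2).aestronglyMeasurable) ?_
    filter_upwards with x
    calc ‖(φ x) ^ 2‖ = |φ x| * |φ x| := by rw [Real.norm_eq_abs, abs_pow, sq]
      _ ≤ C * |φ x| := mul_le_mul_of_nonneg_right (hC x) (abs_nonneg _)
      _ = C * ‖φ x‖ := by rw [Real.norm_eq_abs]
  set B := ∫⁻ x, ENNReal.ofReal ((φ x) ^ 2) with hBdef
  have hB : ENNReal.ofReal (∫ x, (φ x) ^ 2) = B :=
    ofReal_integral_eq_lintegral_ofReal hφ2i (Filter.Eventually.of_forall fun x => sq_nonneg _)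
  have hBne : B ≠ ⊤ := by rw [← hB]; exact ENNReal.ofReal_ne_top
  -- continuity of χ
  have hχc : Continuous (fun p : EuclideanSpace ℝ (Fin d) × EuclideanSpace ℝ (Fin d) =>
      χ p.1 p.2) := by
    have hrw : (fun p : EuclideanSpace ℝ (Fin d) × EuclideanSpace ℝ (Fin d) => χ p.1 p.2)
        = fun p => ∫ t in Set.Ioi (0:ℝ), Real.exp (-t) * φ (p.1 + (ε * t) • p.2) :=
      funext fun p => hχ p.1 p.2
    rw [hrw]
    refine continuous_of_dominated (bound := fun t => Real.exp (-t) * C) ?_ ?_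
      (hexpint.mul_const C) ?_
    · intro p
      have hc : Continuous fun t : ℝ => p.1 + (ε * t) • p.2 :=
        continuous_const.add ((continuous_const.mul continuous_id).smul continuous_const)
      exact ((Real.continuous_exp.comp continuous_neg).mul
        (φ.continuous.comp hc)).aestronglyMeasurable
    · intro p
      filter_upwards with t
      rw [norm_mul, Real.norm_eq_abs, Real.norm_eq_abs, Real.abs_exp]
      exact mul_le_mul_of_nonneg_left (hC _) (Real.exp_pos _).le
    · filter_upwards with t
      have hc : Continuous fun p : EuclideanSpace ℝ (Fin d) × EuclideanSpace ℝ (Fin d) =>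
          p.1 + (ε * t) • p.2 := continuous_fst.add (continuous_snd.const_smul (ε * t))
      exact continuous_const.mul (φ.continuous.comp hc)
  -- key Cauchy-Schwarz bound
  have key : ∀ x v, ENNReal.ofReal ((χ x v) ^ 2) ≤
      ∫⁻ t in Set.Ioi (0:ℝ), ENNReal.ofReal (Real.exp (-t)) *
        ENNReal.ofReal ((φ (x + (ε * t) • v)) ^ 2) := by
    intro x v
    rw [hχ x v]
    have hc : Continuous fun t : ℝ => x + (ε * t) • v :=
      continuous_const.add ((continuous_const.mul continuous_id).smul continuous_const)
    exact aux_cs (φ.continuous.comp hc) (fun t => hC _)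
  -- measurability
  have hjm : Measurable (fun q : (EuclideanSpace ℝ (Fin d) × EuclideanSpace ℝ (Fin d)) × ℝ =>
      ENNReal.ofReal (Real.exp (-q.2)) * ENNReal.ofReal ((φ (q.1.1 + (ε * q.2) • q.1.2)) ^ 2)) := by
    refine Measurable.mul (M := ℝ≥0∞) ?_ ?_
    · exact ENNReal.measurable_ofReal.comp (Real.continuous_exp.comp
        (continuous_neg.comp continuous_snd)).measurable
    · have hc : Continuous fun q : (EuclideanSpace ℝ (Fin d) × EuclideanSpace ℝ (Fin d)) × ℝ =>
          q.1.1 + (ε * q.2) • q.1.2 :=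
        (continuous_fst.comp continuous_fst).add
          ((continuous_const.mul continuous_snd).smul (continuous_snd.comp continuous_fst))
      exact ENNReal.measurable_ofReal.comp ((φ.continuous.comp hc).pow 2).measurable
  set K : EuclideanSpace ℝ (Fin d) → EuclideanSpace ℝ (Fin d) → ℝ≥0∞ := fun x v =>
    ∫⁻ t in Set.Ioi (0:ℝ), ENNReal.ofReal (Real.exp (-t)) *
      ENNReal.ofReal ((φ (x + (ε * t) • v)) ^ 2) with hKdef
  have hKm : Measurable (fun p : EuclideanSpace ℝ (Fin d) × EuclideanSpace ℝ (Fin d) =>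
      K p.1 p.2) := Measurable.lintegral_prod_right' hjm
  -- the inner lintegral in v
  set g : EuclideanSpace ℝ (Fin d) → ℝ≥0∞ := fun x =>
    ∫⁻ v, ENNReal.ofReal ((χ x v) ^ 2 * F v) with hgdef
  have hgm : Measurable g :=
    Measurable.lintegral_prod_right' (ENNReal.measurable_ofReal.comp
      (((hχc.pow 2).measurable).mul (hFmeas.comp measurable_snd)))
  -- step: evaluate K integral
  have hKval : ∀ v, ∫⁻ x, K x v = B := by
    intro v
    have hswap : ∫⁻ x, K x v = ∫⁻ t in Set.Ioi (0:ℝ), ∫⁻ x, ENNReal.ofReal (Real.exp (-t)) *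
        ENNReal.ofReal ((φ (x + (ε * t) • v)) ^ 2) := by
      refine lintegral_lintegral_swap ?_
      refine Measurable.aemeasurable (Measurable.mul (M := ℝ≥0∞)
        (f := fun q : EuclideanSpace ℝ (Fin d) × ℝ => ENNReal.ofReal (Real.exp (-q.2)))
        (g := fun q : EuclideanSpace ℝ (Fin d) × ℝ => ENNReal.ofReal ((φ (q.1 + (ε * q.2) • v)) ^ 2)) ?_ ?_)
      · exact ENNReal.measurable_ofReal.comp (Real.continuous_exp.comp
          (continuous_neg.comp continuous_snd)).measurable
      · have hc : Continuous fun q : EuclideanSpace ℝ (Fin d) × ℝ =>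
            q.1 + (ε * q.2) • v :=
          continuous_fst.add ((continuous_const.mul continuous_snd).smul continuous_const)
        exact ENNReal.measurable_ofReal.comp ((φ.continuous.comp hc).pow 2).measurable
    rw [hswap]
    have : ∀ t : ℝ, ∫⁻ x, ENNReal.ofReal (Real.exp (-t)) *
        ENNReal.ofReal ((φ (x + (ε * t) • v)) ^ 2) = ENNReal.ofReal (Real.exp (-t)) * B := by
      intro t
      rw [lintegral_const_mul' _ _ ENNReal.ofReal_ne_top,
        lintegral_add_right_eq_self (fun x => ENNReal.ofReal ((φ x) ^ 2)) ((ε * t) • v)]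
    simp_rw [this]
    rw [lintegral_mul_const' B _ hBne, hexp1, one_mul]
  -- main chain
  have step1 : ∀ x, (∫ v, (χ x v) ^ 2 * F v) = (g x).toReal := by
    intro x
    refine integral_eq_lintegral_of_nonneg_ae
      (Filter.Eventually.of_forall fun v => mul_nonneg (sq_nonneg _) (hFnonneg v)) ?_
    exact (((hχc.comp (Continuous.prodMk_right x)).pow 2).measurable.mul hFmeas).aestronglyMeasurable
  have step2 : (∫ x, ∫ v, (χ x v) ^ 2 * F v)
      = (∫⁻ x, ENNReal.ofReal ((g x).toReal)).toReal := by
    simp_rw [step1]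
    refine integral_eq_lintegral_of_nonneg_ae
      (Filter.Eventually.of_forall fun x => ENNReal.toReal_nonneg) ?_
    exact hgm.ennreal_toReal.aestronglyMeasurable
  have step3 : (∫⁻ x, ENNReal.ofReal ((g x).toReal)) ≤ B := by
    calc (∫⁻ x, ENNReal.ofReal ((g x).toReal)) ≤ ∫⁻ x, g x :=
        lintegral_mono fun x => ENNReal.ofReal_toReal_le
      _ ≤ ∫⁻ x, ∫⁻ v, K x v * ENNReal.ofReal (F v) := by
        refine lintegral_mono fun x => ?_
        refine lintegral_mono fun v => ?_
        rw [ENNReal.ofReal_mul (sq_nonneg _)]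
        exact mul_le_mul_left (key x v) _
      _ = ∫⁻ v, ∫⁻ x, K x v * ENNReal.ofReal (F v) := by
        refine lintegral_lintegral_swap ?_
        exact (hKm.mul (ENNReal.measurable_ofReal.comp
          (hFmeas.comp measurable_snd))).aemeasurable
      _ = ∫⁻ v, B * ENNReal.ofReal (F v) := by
        refine lintegral_congr fun v => ?_
        rw [lintegral_mul_const' _ _ ENNReal.ofReal_ne_top, hKval v]
      _ = B := by rw [lintegral_const_mul' B _ hBne, hF1, mul_one]
  rw [step2]
  calc (∫⁻ x, ENNReal.ofReal ((g x).toReal)).toReal ≤ B.toReal :=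
      ENNReal.toReal_mono hBne step3
    _ = ∫ x, (φ x) ^ 2 := by
      rw [← hB, ENNReal.toReal_ofReal (integral_nonneg fun x => sq_nonneg _)]
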